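/- Let a_1, …, a_n be nonzero even integers (n ≥ 1). Then for every 1 ≤ j ≤ n the tail value [a_j, …, a_n] is well-defined and satisfies |[a_j, …, a_n]| > 1. In particular the full continued fraction [a_1, …, a_n] is a well-defined rational number of absolute value greater than 1; writing it in lowest terms as α/β, one has |α| > |β|. (Remark 4.1(i): if α/β = [c_1, d_1, c_2, …, d_n, c_{n+1}] with all entries nonzero even integers, then |α| ≥ |β|.) -/

import Mathlib

/-- The value of a finite continued fraction `[a_1, …, a_n] = a_1 + 1/(a_2 + 1/(⋯ + 1/a_n))`,
with junk value `0` on the empty list. -/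
def cfVal : List ℤ → ℚ
  | [] => 0
  | [a] => (a : ℚ)
  | a :: b :: l => (a : ℚ) + (cfVal (b :: l))⁻¹

lemma cf_abs_two {a : ℤ} (h0 : a ≠ 0) (he : Even a) : (2:ℚ) ≤ |(a:ℚ)| := by
  rcases he with ⟨k, hk⟩
  have h2 : 2 ≤ a ∨ a ≤ -2 := by omega
  have : (2:ℤ) ≤ |a| := by
    rcases h2 with h | h
    · rw [abs_of_nonneg (by omega)]; exact h
    · rw [abs_of_nonpos (by omega)]; omega
  calc (2:ℚ) = ((2:ℤ):ℚ) := by norm_num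
  _ ≤ ((|a|:ℤ):ℚ) := by exact_mod_cast this
  _ = |(a:ℚ)| := by push_cast [Int.cast_abs]; ring_nf

lemma cf_gt_one : ∀ (l : List ℤ), (∀ x ∈ l, x ≠ 0 ∧ Even x) → l ≠ [] → 1 < |cfVal l| := by
  intro l
  induction l with
  | nil => intro _ h; exact absurd rfl h
  | cons a t ih =>
    intro h _
    obtain ⟨h0, he⟩ := h a List.mem_cons_self
    have h2 := cf_abs_two h0 he
    cases t with
    | nil => simpa [cfVal] using lt_of_lt_of_le one_lt_two h2
    | cons b u =>
      have ht := ih (fun x hx => h x (List.mem_cons_of_mem _ hx)) (by simp)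
      have hinv : |(cfVal (b :: u))⁻¹| < 1 := by
        rw [abs_inv]
        exact inv_lt_one_of_one_lt₀ ht
      have habs : |(a:ℚ)| ≤ |(a:ℚ) + (cfVal (b :: u))⁻¹| + |(cfVal (b :: u))⁻¹| := by
        calc |(a:ℚ)| = |((a:ℚ) + (cfVal (b :: u))⁻¹) + (-(cfVal (b :: u))⁻¹)| := by ring_nf
        _ ≤ |(a:ℚ) + (cfVal (b :: u))⁻¹| + |(-(cfVal (b :: u))⁻¹)| := abs_add_le _ _
        _ = |(a:ℚ) + (cfVal (b :: u))⁻¹| + |(cfVal (b :: u))⁻¹| := by rw [abs_neg]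
      show 1 < |(a:ℚ) + (cfVal (b :: u))⁻¹|
      linarith

theorem even_cf_tails_gt_one (L : List ℤ) (hne : L ≠ [])
    (hL : ∀ x ∈ L, x ≠ 0 ∧ Even x) :
    (∀ l, l ≠ [] → l <:+ L → 1 < |cfVal l|) ∧ ((cfVal L).den : ℤ) < |(cfVal L).num| := by
  constructor
  · intro l hl hsuf
    exact cf_gt_one l (fun x hx => hL x (hsuf.subset hx)) hl
  · have h1 := cf_gt_one L hL hne
    set q := cfVal L
    have hden : (0:ℚ) < (q.den : ℚ) := by positivity
    have key : (q.den : ℚ) < |(q.num : ℚ)| := by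
      have : (q.den : ℚ) * 1 < (q.den : ℚ) * |q| := by
        exact mul_lt_mul_of_pos_left h1 hden
      have habs : (q.den : ℚ) * |q| = |(q.num : ℚ)| := by
        have hnd : (q.num : ℚ) = q * (q.den : ℚ) := by
          rw [Rat.mul_den_eq_num]
        rw [hnd, abs_mul, abs_of_pos hden]; ring
      linarith [this, habs]
    exact_mod_cast (by push_cast [Int.cast_abs] at key ⊢; exact key : ((q.den:ℤ):ℚ) < ((|q.num|:ℤ):ℚ))
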